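/- arXiv:1403.6404 — 3 statements merged into one kernel-verified Lean document; each statement's English description precedes it below -/
import Mathlib

section
/- Let a > 0 and b ≤ 1 be real numbers. Then for all real numbers x ≥ b, one has x - a·log(max(1,x)) ≥ (1/2)·x + min((1/2)·b, a - a·log(2a)). -/
theorem stmt_0 (a b : ℝ) (ha : 0 < a) (hb : b ≤ 1) :
    ∀ x : ℝ, b ≤ x →
      x - a * Real.log (max 1 x) ≥
        (1/2) * x + min ((1/2) * b) (a - a * Real.log (2*a)) := by
  intro x hx
  rcases le_or_gt x 1 with h1 | h1
  · rw [max_eq_left h1, Real.log_one, mul_zero, sub_zero]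
    have : min ((1/2) * b) (a - a * Real.log (2*a)) ≤ (1/2) * b :=
      min_le_left _ _
    nlinarith
  · rw [max_eq_right h1.le]
    have hx0 : 0 < x := lt_trans one_pos h1
    have h2a : 0 < 2 * a := by linarith
    have hlog : Real.log (x / (2*a)) ≤ x / (2*a) - 1 :=
      Real.log_le_sub_one_of_pos (div_pos hx0 h2a)
    rw [Real.log_div (ne_of_gt hx0) (ne_of_gt h2a)] at hlog
    have key : x - a * Real.log x ≥ (1/2) * x + (a - a * Real.log (2*a)) := by
      have := mul_le_mul_of_nonneg_left hlog (le_of_lt ha)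
      have hdiv : a * (x / (2*a)) = x / 2 := by field_simp
      nlinarith
    have : min ((1/2) * b) (a - a * Real.log (2*a)) ≤ a - a * Real.log (2*a) :=
      min_le_right _ _
    linarith
end

section
/- Let A be a discrete valuation ring whose fraction field K has characteristic zero, and let B be the integral closure of A in a finite field extension L/K of degree n. Suppose B is a discrete valuation ring with ramification index e over A. Then the valuation on B of the different ideal 𝔇_{B/A} satisfies ord_B(𝔇_{B/A}) ≤ e - 1 + e·ord_A(n). -/
/-- Lenstra's generalization of Dedekind's discriminant bound: if `A` is a DVR whose
fraction field `K` has characteristic zero, `B` is the integral closure of `A` in a finite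
extension `L/K` of degree `n`, and `B` is a DVR with ramification index `e` over `A`, then
the valuation `r` on `B` of the different ideal `𝔇_{B/A}` satisfies
`r ≤ e - 1 + e · ord_A(n)`. -/
theorem stmt_3 (A K L B : Type*) [CommRing A] [IsDomain A] [IsDiscreteValuationRing A]
    [Field K] [Field L] [CommRing B] [IsDomain B] [IsDiscreteValuationRing B]
    [Algebra A K] [IsFractionRing A K] [CharZero K]
    [Algebra K L] [FiniteDimensional K L]
    [Algebra A B] [Algebra B L] [Algebra A L]
    [IsScalarTower A K L] [IsScalarTower A B L]
    [IsIntegralClosure B A L] [NoZeroSMulDivisors A B]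
    (n : ℕ) (hn : n = Module.finrank K L)
    (e : ℕ) (he : e = Ideal.ramificationIdx'
      (IsLocalRing.maximalIdeal A) (IsLocalRing.maximalIdeal B))
    (r : ℕ) (hr : differentIdeal A B = IsLocalRing.maximalIdeal B ^ r)
    (v : ℕ) (hv : IsDiscreteValuationRing.addVal A (n : A) = (v : ℕ∞)) :
    (r : ℤ) ≤ e - 1 + e * v := by
  have hfr : IsFractionRing B L := IsIntegralClosure.isFractionRing_of_finite_extension A K L B
  -- uniformizers
  obtain ⟨π, hπ⟩ := IsDiscreteValuationRing.exists_irreducible A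
  obtain ⟨ϖ, hϖ⟩ := IsDiscreteValuationRing.exists_irreducible B
  have hinj : Function.Injective (algebraMap A B) :=
    FaithfulSMul.algebraMap_injective A B
  have hπ0 : π ≠ 0 := hπ.ne_zero
  have hβ0 : algebraMap A B π ≠ 0 := fun h => hπ0 (hinj (by simpa using h))
  -- `algebraMap A B π` is associated to `ϖ ^ nE` for some `nE`
  obtain ⟨nE, hnE⟩ := IsDiscreteValuationRing.associated_pow_irreducible hβ0 hϖ
  -- `algebraMap A B π` is not a unit
  have hnu : ¬ IsUnit (algebraMap A B π) := by
    intro hu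
    obtain ⟨u, hu⟩ := hu
    have hπK0 : algebraMap A K π ≠ 0 := fun h => hπ0 ((IsFractionRing.injective A K) (by simpa using h))
    have h3 : algebraMap K L (algebraMap A K π) ≠ 0 := by simpa using hπK0
    have h2 : algebraMap K L (algebraMap A K π) * algebraMap B L (↑u⁻¹ : B) = 1 := by
      rw [← IsScalarTower.algebraMap_apply A K L, IsScalarTower.algebraMap_apply A B L, ← map_mul,
        ← hu]
      rw [Units.mul_inv, map_one]
    have h1 : algebraMap B L (↑u⁻¹ : B) = algebraMap K L (algebraMap A K π)⁻¹ := by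
      rw [map_inv₀]
      exact (inv_eq_of_mul_eq_one_right h2).symm
    have hint : IsIntegral A ((algebraMap A K π)⁻¹) := by
      rw [← isIntegral_algebraMap_iff (algebraMap K L).injective, ← h1]
      exact (IsIntegralClosure.isIntegral A L (↑u⁻¹ : B)).algebraMap
    obtain ⟨a, ha⟩ := IsIntegrallyClosed.isIntegral_iff.mp hint
    have : algebraMap A K (a * π) = algebraMap A K 1 := by
      rw [map_mul, ha, map_one, inv_mul_cancel₀ hπK0]
    exact hπ.not_isUnit (IsUnit.of_mul_eq_one (a := π) a
      (by rw [mul_comm]; exact (IsFractionRing.injective A K) this))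
  -- hence `nE ≥ 1`
  have hnE1 : 1 ≤ nE := by
    by_contra h
    have hnE0 : nE = 0 := by omega
    rw [hnE0, pow_zero] at hnE
    exact hnu (hnE.symm.isUnit isUnit_one)
  -- the map of the maximal ideal of A is the nE-th power of the maximal ideal of B
  have hmapA : Ideal.map (algebraMap A B) (IsLocalRing.maximalIdeal A) =
      Ideal.span {algebraMap A B π} := by
    rw [hπ.maximalIdeal_eq, Ideal.map_span, Set.image_singleton]
  have hspan : Ideal.span {algebraMap A B π} = IsLocalRing.maximalIdeal B ^ nE := by
    rw [hϖ.maximalIdeal_eq, Ideal.span_singleton_pow,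
      Ideal.span_singleton_eq_span_singleton]
    exact hnE
  -- the ramification index is nE
  have hE : e = nE := by
    rw [he]
    refine Ideal.ramificationIdx'_spec (le_of_eq (by rw [hmapA, hspan])) ?_
    rw [hmapA, hspan, hϖ.maximalIdeal_eq, Ideal.span_singleton_pow, Ideal.span_singleton_pow,
      Ideal.span_singleton_le_span_singleton]
    intro hdvd
    have hval := (IsDiscreteValuationRing.addVal_le_iff_dvd (R := B)).mpr hdvd
    rw [hϖ.addVal_pow, hϖ.addVal_pow] at hval
    have : nE + 1 ≤ nE := by exact_mod_cast hval
    omega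
  -- key step : r < e * (v + 1)
  have key : ¬ (e * (v + 1) ≤ r) := by
    intro hle
    have hπK0 : algebraMap A K (π ^ (v + 1)) ≠ 0 := fun h =>
      pow_ne_zero (v + 1) hπ0 ((IsFractionRing.injective A K) (by simpa using h))
    have hb0 : algebraMap A B (π ^ (v + 1)) ≠ 0 := fun h =>
      pow_ne_zero (v + 1) hπ0 (hinj (by simpa using h))
    have hI : (Ideal.span {algebraMap A B (π ^ (v + 1))} : Ideal B) ≠ ⊥ := by
      simpa [Ideal.span_singleton_eq_bot] using hb0
    have hle2 : differentIdeal A B ≤ Ideal.span {algebraMap A B (π ^ (v + 1))} := by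
      rw [hr]
      calc IsLocalRing.maximalIdeal B ^ r ≤ IsLocalRing.maximalIdeal B ^ (e * (v + 1)) :=
            Ideal.pow_le_pow_right hle
        _ = (IsLocalRing.maximalIdeal B ^ nE) ^ (v + 1) := by rw [← pow_mul, hE]
        _ = Ideal.span {algebraMap A B π} ^ (v + 1) := by rw [hspan]
        _ = Ideal.span {algebraMap A B (π ^ (v + 1))} := by
              rw [Ideal.span_singleton_pow, map_pow]
    have hdual := (differentialIdeal_le_iff (K := K) (L := L) hI).mp hle2
    set c : K := algebraMap A K (π ^ (v + 1)) with hc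
    have hxmem : algebraMap K L c⁻¹ ∈
        (((Ideal.span {algebraMap A B (π ^ (v + 1))} : Ideal B) :
          FractionalIdeal (nonZeroDivisors B) L)⁻¹ : FractionalIdeal (nonZeroDivisors B) L) := by
      rw [FractionalIdeal.coeIdeal_span_singleton, FractionalIdeal.spanSingleton_inv]
      have : algebraMap B L (algebraMap A B (π ^ (v + 1))) = algebraMap K L c := by
        rw [hc, ← IsScalarTower.algebraMap_apply A K L, ← IsScalarTower.algebraMap_apply A B L]
      rw [this, ← map_inv₀]
      exact FractionalIdeal.mem_spanSingleton_self _ _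
    have htr : Algebra.trace K L (algebraMap K L c⁻¹) ∈ (1 : Submodule A K) :=
      hdual (Submodule.mem_map_of_mem hxmem)
    rw [Algebra.trace_algebraMap] at htr
    rw [Submodule.mem_one] at htr
    obtain ⟨a, ha⟩ := htr
    have hac : algebraMap A K (a * π ^ (v + 1)) = algebraMap A K ((n : A)) := by
      rw [map_mul, ha, ← hc, map_natCast, smul_mul_assoc, inv_mul_cancel₀ hπK0, ← hn]
      simp
    have hdvd : π ^ (v + 1) ∣ (n : A) :=
      ⟨a, by rw [← (IsFractionRing.injective A K) hac, mul_comm]⟩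
    have hval := (IsDiscreteValuationRing.addVal_le_iff_dvd (R := A)).mpr hdvd
    rw [hπ.addVal_pow, hv] at hval
    have : v + 1 ≤ v := by exact_mod_cast hval
    omega
  have hlt : (r : ℤ) < (e : ℤ) * ((v : ℤ) + 1) := by exact_mod_cast not_le.mp key
  linarith
end

section
/- Let c > 0 and t ≥ √3/2 be real numbers and let b be a real number. Then the series ∑_{n ∈ ℤ} exp(-π·c·(n+b)²·t) converges and is bounded above by 2/(1 - exp(-π·c·t)). -/
theorem stmt_5 (c t b : ℝ) (hc : 0 < c) (ht : Real.sqrt 3 / 2 ≤ t) :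
    Summable (fun n : ℤ => Real.exp (-Real.pi * c * ((n : ℝ) + b)^2 * t)) ∧
      ∑' n : ℤ, Real.exp (-Real.pi * c * ((n : ℝ) + b)^2 * t) ≤
        2 / (1 - Real.exp (-Real.pi * c * t)) := by
  have hpi := Real.pi_pos
  have ht0 : 0 < t := lt_of_lt_of_le (by positivity) ht
  set a := Real.pi * c * t with ha_def
  have ha : 0 < a := by positivity
  have hr : Real.exp (-a) < 1 := by
    rw [Real.exp_lt_one_iff]; linarith
  have hr0 : 0 ≤ Real.exp (-a) := (Real.exp_pos _).le
  set β := Int.fract b with hβ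
  have hβ0 : 0 ≤ β := Int.fract_nonneg b
  have hβ1 : β < 1 := Int.fract_lt_one b
  set g : ℤ → ℝ := fun n => Real.exp (-a * ((n : ℝ) + β) ^ 2) with hg
  -- geometric majorant
  have hgeo : Summable (fun n : ℕ => Real.exp (-a) ^ n) :=
    summable_geometric_of_lt_one hr0 hr
  have hsq : ∀ n : ℕ, (n : ℝ) ≤ (n : ℝ) ^ 2 := by
    intro n
    exact_mod_cast Nat.le_self_pow two_ne_zero n
  have h1 : ∀ n : ℕ, g ((n : ℤ)) ≤ Real.exp (-a) ^ n := by
    intro n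
    rw [← Real.exp_nat_mul]
    apply Real.exp_le_exp.mpr
    push_cast
    have key : (n : ℝ) ≤ ((n : ℝ) + β) ^ 2 := by nlinarith [hsq n, n.cast_nonneg (α := ℝ)]
    nlinarith [mul_le_mul_of_nonneg_left key ha.le]
  have h2 : ∀ n : ℕ, g (-(n + 1)) ≤ Real.exp (-a) ^ n := by
    intro n
    rw [← Real.exp_nat_mul]
    apply Real.exp_le_exp.mpr
    push_cast
    have key : (n : ℝ) ≤ (-((n : ℝ) + 1) + β) ^ 2 := by
      nlinarith [hsq n, n.cast_nonneg (α := ℝ), mul_nonneg (sub_nonneg.mpr hβ1.le)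
        (by nlinarith [n.cast_nonneg (α := ℝ)] : (0:ℝ) ≤ 2 * n + 1 - β)]
    nlinarith [mul_le_mul_of_nonneg_left key ha.le]
  have hgpos : ∀ n : ℤ, 0 ≤ g n := fun n => (Real.exp_pos _).le
  have hs1 : Summable fun n : ℕ => g n :=
    Summable.of_nonneg_of_le (fun n => hgpos _) h1 hgeo
  have hs2 : Summable fun n : ℕ => g (-(n + 1)) :=
    Summable.of_nonneg_of_le (fun n => hgpos _) h2 hgeo
  have hsg : Summable g := Summable.of_nat_of_neg_add_one hs1 hs2
  have htg : ∑' n : ℤ, g n ≤ 2 / (1 - Real.exp (-a)) := by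
    rw [tsum_of_nat_of_neg_add_one hs1 hs2]
    have b1 : ∑' n : ℕ, g n ≤ (1 - Real.exp (-a))⁻¹ := by
      rw [← tsum_geometric_of_lt_one hr0 hr]
      exact Summable.tsum_le_tsum h1 hs1 hgeo
    have b2 : ∑' n : ℕ, g (-(n + 1)) ≤ (1 - Real.exp (-a))⁻¹ := by
      rw [← tsum_geometric_of_lt_one hr0 hr]
      exact Summable.tsum_le_tsum h2 hs2 hgeo
    have : 2 / (1 - Real.exp (-a)) = (1 - Real.exp (-a))⁻¹ + (1 - Real.exp (-a))⁻¹ := by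
      field_simp; ring
    linarith
  -- transfer via reindexing
  have hfun : (fun n : ℤ => Real.exp (-Real.pi * c * ((n : ℝ) + b) ^ 2 * t))
      = fun n : ℤ => g ((Equiv.addRight (⌊b⌋ : ℤ)) n) := by
    funext n
    simp only [hg, Equiv.coe_addRight]
    congr 1
    have : ((n + ⌊b⌋ : ℤ) : ℝ) + β = (n : ℝ) + b := by
      push_cast
      rw [hβ, Int.fract]
      ring
    rw [this]; ring
  have hsf : Summable (fun n : ℤ => Real.exp (-Real.pi * c * ((n : ℝ) + b) ^ 2 * t)) := by
    rw [hfun]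
    exact hsg.comp_injective (Equiv.addRight (⌊b⌋ : ℤ)).injective
  refine ⟨hsf, ?_⟩
  have : (∑' n : ℤ, Real.exp (-Real.pi * c * ((n : ℝ) + b) ^ 2 * t)) = ∑' n : ℤ, g n := by
    rw [hfun]
    exact (Equiv.addRight (⌊b⌋ : ℤ)).tsum_eq g
  rw [this]
  have : -Real.pi * c * t = -a := by rw [ha_def]; ring
  rw [this]
  exact htg
end
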